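/- Let G be a connected 2-sparse graph with m ≥ 1 edges, n vertices, and ℓ leaves. If G is not a cycle, then P(G) = ℓ + m − n. -/

import Mathlib

namespace PaperPC

open SimpleGraph

variable {V : Type*}

/-- The degree of a vertex, via the cardinality of its neighbor set. -/
noncomputable def ndeg (G : SimpleGraph V) (v : V) : ℕ := (G.neighborSet v).ncard

/-- A linear forest: an acyclic graph of maximum degree at most 2,
i.e. a vertex-disjoint union of paths.  A spanning linear subforest of `G`
is exactly a path covering of `G` (isolated vertices are one-vertex paths). -/
def IsLinearForest (H : SimpleGraph V) : Prop :=
  H.IsAcyclic ∧ ∀ v, ndeg H v ≤ 2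

/-- The number of paths of a path covering = number of connected components. -/
noncomputable def numPaths (H : SimpleGraph V) : ℕ := Nat.card H.ConnectedComponent

/-- The path covering number `P(G)`. -/
noncomputable def pathCoverNumber (G : SimpleGraph V) : ℕ :=
  sInf {k | ∃ H ≤ G, IsLinearForest H ∧ numPaths H = k}

/-- `H` is a minimum path covering of `G`. -/
def IsMinPathCover (G H : SimpleGraph V) : Prop :=
  H ≤ G ∧ IsLinearForest H ∧ numPaths H = pathCoverNumber G

open scoped Classical in
/-- The path sequence of a path covering: the multiset of the numbers of vertices
of its paths (a multiset encodes the nondecreasing ordered sequence). -/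
noncomputable def pathSeq [Fintype V] (H : SimpleGraph V) : Multiset ℕ :=
  (Finset.univ : Finset H.ConnectedComponent).val.map fun c => c.supp.ncard

/-- `G` admits a unique path sequence. -/
def UniquePathSequence [Fintype V] (G : SimpleGraph V) : Prop :=
  ∀ H₁ H₂ : SimpleGraph V, IsMinPathCover G H₁ → IsMinPathCover G H₂ →
    pathSeq H₁ = pathSeq H₂

/-- Number of leaves (vertices of degree 1). -/
noncomputable def numLeaves (G : SimpleGraph V) : ℕ := {v | ndeg G v = 1}.ncard

/-- Number of heavy edges (edges both of whose endpoints have degree > 2). -/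
noncomputable def numHeavyEdges (G : SimpleGraph V) : ℕ :=
  {e ∈ G.edgeSet | ∀ v ∈ e, 2 < ndeg G v}.ncard

/-- Number of edges. -/
noncomputable def numEdges (G : SimpleGraph V) : ℕ := G.edgeSet.ncard

/-- A graph is 2-sparse if no two adjacent vertices both have degree > 2. -/
def TwoSparse (G : SimpleGraph V) : Prop :=
  ∀ u v, G.Adj u v → ndeg G u ≤ 2 ∨ ndeg G v ≤ 2

/-- `G` is a path graph. -/
def IsPathGraph (G : SimpleGraph V) : Prop := G.IsTree ∧ ∀ v, ndeg G v ≤ 2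

/-- `G` is a cycle graph. -/
def IsCycleGraph (G : SimpleGraph V) : Prop := G.Connected ∧ ∀ v, ndeg G v = 2

/-- A generalized star: a tree with exactly one heavy vertex (the center) in which
all vines have the same number of vertices (equivalently, all leaves are at the same
distance from the center). -/
def IsGenStar (G : SimpleGraph V) : Prop :=
  G.IsTree ∧ ∃ c k, 2 < ndeg G c ∧ (∀ v, v ≠ c → ndeg G v ≤ 2) ∧
    ∀ v, ndeg G v = 1 → G.dist c v = k

/-- An L(2,1)-labeling. -/
def IsL21Labeling (G : SimpleGraph V) (f : V → ℕ) : Prop :=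
  (∀ u v, G.Adj u v → 2 ≤ Nat.dist (f u) (f v)) ∧
  (∀ u v, G.dist u v = 2 → 1 ≤ Nat.dist (f u) (f v))

/-- `λ(G)`: the least `k` such that `G` has an L(2,1)-labeling with labels in `{0,…,k}`. -/
noncomputable def lambdaNum (G : SimpleGraph V) : ℕ :=
  sInf {k | ∃ f : V → ℕ, IsL21Labeling G f ∧ ∀ v, f v ≤ k}

/-- A λ-labeling: an L(2,1)-labeling with maximum label `λ(G)`. -/
def IsLambdaLabeling (G : SimpleGraph V) (f : V → ℕ) : Prop :=
  IsL21Labeling G f ∧ (∀ v, f v ≤ lambdaNum G) ∧ ∃ v, f v = lambdaNum G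

/-- The set of holes of a labeling: unused labels `h` with `1 ≤ h ≤ λ(G) - 1`. -/
def labHoles (G : SimpleGraph V) (f : V → ℕ) : Set ℕ :=
  {h | 1 ≤ h ∧ h + 1 ≤ lambdaNum G ∧ ∀ v, f v ≠ h}

/-- The hole index `ρ(G)`: minimum number of holes over all λ-labelings. -/
noncomputable def holeIndex (G : SimpleGraph V) : ℕ :=
  sInf {k | ∃ f : V → ℕ, IsLambdaLabeling G f ∧ (labHoles G f).ncard = k}

open scoped Classical in
/-- The island sequence of a labeling: the multiset of cardinalities of the maximal
intervals `[a,b]` of consecutive integers all used by the labeling. -/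
noncomputable def islandSeq [Fintype V] (G : SimpleGraph V) (f : V → ℕ) : Multiset ℕ :=
  (((Finset.range (lambdaNum G + 1)) ×ˢ (Finset.range (lambdaNum G + 1))).filter
    (fun q => q.1 ≤ q.2 ∧ (∀ x ∈ Finset.Icc q.1 q.2, ∃ v, f v = x) ∧
      (q.1 = 0 ∨ ∀ v, f v ≠ q.1 - 1) ∧ ∀ v, f v ≠ q.2 + 1)).val.map
    fun q => q.2 - q.1 + 1

/-- `G` admits (at least) two distinct island sequences. -/
def MultipleIslandSequences [Fintype V] (G : SimpleGraph V) : Prop :=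
  ∃ f g : V → ℕ, IsLambdaLabeling G f ∧ IsLambdaLabeling G g ∧
    (labHoles G f).ncard = holeIndex G ∧ (labHoles G g).ncard = holeIndex G ∧
    islandSeq G f ≠ islandSeq G g

/-- A vine: a maximal path one of whose endpoints (`a`) is a leaf and all of whose
vertices are light.  Maximality: any light vertex adjacent to the other end already
lies on the path. -/
def IsVine (G : SimpleGraph V) {a b : V} (p : G.Walk a b) : Prop :=
  p.IsPath ∧ ndeg G a = 1 ∧ (∀ v ∈ p.support, ndeg G v ≤ 2) ∧
  ∀ c, G.Adj b c → ndeg G c ≤ 2 → c ∈ p.support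

/-- A vine with center `v`: the (heavy) vertex adjacent to the non-leaf end of the vine. -/
def IsVineWithCenter (G : SimpleGraph V) {a b : V} (p : G.Walk a b) (v : V) : Prop :=
  IsVine G p ∧ G.Adj b v ∧ 2 < ndeg G v

/-- The matching number of the subgraph of `G` induced by `S`. -/
noncomputable def matchingNumberOn (G : SimpleGraph V) (S : Set V) : ℕ :=
  sSup {k | ∃ M : Set (Sym2 V), M ⊆ G.edgeSet ∧ (∀ e ∈ M, ∀ v ∈ e, v ∈ S) ∧
    (∀ e ∈ M, ∀ f ∈ M, e ≠ f → ∀ v, v ∈ e → v ∉ f) ∧ M.ncard = k}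

/-- Labels used in the family `F`: `A`, or `B k` where `k` records the number of
vertices of each vine of the labeled generalized star that produced the label. -/
inductive Lab | A | B (k : ℕ)

/-- A labeled generalized star with center `c` whose vines have `k` vertices each
(equivalently, every leaf is at distance `k` from `c`); the degenerate case
`deg c = 2` is the convention regarding a path of length `2k` as a labeled
generalized star with two vines.  The neighbors of the center are labeled `B k`,
the other non-leaf vertices (and the center) are labeled `A`, leaves are unlabeled. -/
def IsLGenStar {W : Type*} (H : SimpleGraph W) (c : W) (k : ℕ)
    (lab : W → Option Lab) : Prop :=
  H.IsTree ∧ 2 ≤ ndeg H c ∧ (∀ v, v ≠ c → ndeg H v ≤ 2) ∧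
  (∀ v, ndeg H v = 1 → H.dist c v = k) ∧
  lab c = some Lab.A ∧
  (∀ v, H.Adj c v → lab v = some (Lab.B k)) ∧
  (∀ v, v ≠ c → ¬H.Adj c v → ndeg H v = 1 → lab v = none) ∧
  (∀ v, v ≠ c → ¬H.Adj c v → 2 ≤ ndeg H v → lab v = some Lab.A)

/-- A labeled path: a path with at least three vertices, non-leaf vertices labeled `A`. -/
def IsLPath {W : Type*} (H : SimpleGraph W) (lab : W → Option Lab) : Prop :=
  H.IsTree ∧ (∀ v, ndeg H v ≤ 2) ∧ 3 ≤ Nat.card W ∧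
  (∀ v, ndeg H v = 1 → lab v = none) ∧
  ∀ v, 2 ≤ ndeg H v → lab v = some Lab.A

/-- The induced subgraph of `T` on `s` is a labeled generalized star. -/
def LGenStarOn (T : SimpleGraph V) (s : Set V) (c : V) (k : ℕ)
    (lab : V → Option Lab) : Prop :=
  ∃ hc : c ∈ s, IsLGenStar (T.induce s) ⟨c, hc⟩ k fun v => lab v.1

/-- The induced subgraph of `T` on `s` is a labeled path. -/
def LPathOn (T : SimpleGraph V) (s : Set V) (lab : V → Option Lab) : Prop :=
  IsLPath (T.induce s) fun v => lab v.1

/-- The family `F` of labeled trees, realized as induced subgraphs (on vertex sets `s`)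
of an ambient graph `T`:  start from a labeled generalized star with at least three
vines or from a labeled path, and repeatedly attach, via a single new edge, a labeled
generalized star with at least three vines at a vertex labeled `A` (Type-1), a labeled
path by one of its non-leaf vertices at a vertex labeled `A` (Type-2), or a labeled
generalized star whose vines have the same number of vertices `k` as those of the star
that labeled `u` with `B k`, at a vertex `u` labeled `B k` (Type-3). -/
inductive InF (T : SimpleGraph V) : Set V → (V → Option Lab) → Prop
  | base_star (s : Set V) (c : V) (k : ℕ) (lab : V → Option Lab) :
      LGenStarOn T s c k lab → 3 ≤ {w ∈ s | T.Adj c w}.ncard → InF T s lab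
  | base_path (s : Set V) (lab : V → Option Lab) :
      LPathOn T s lab → InF T s lab
  | type1 (s : Set V) (lab : V → Option Lab) (t : Set V) (lab' : V → Option Lab)
      (u c : V) (k : ℕ) :
      InF T s lab → Disjoint s t → u ∈ s → c ∈ t → lab u = some Lab.A →
      LGenStarOn T t c k lab' → 3 ≤ {w ∈ t | T.Adj c w}.ncard →
      (∀ x ∈ s, ∀ y ∈ t, (T.Adj x y ↔ x = u ∧ y = c)) →
      (∀ x ∈ s, lab' x = lab x) →
      InF T (s ∪ t) lab'
  | type2 (s : Set V) (lab : V → Option Lab) (t : Set V) (lab' : V → Option Lab)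
      (u v : V) :
      InF T s lab → Disjoint s t → u ∈ s → v ∈ t → lab u = some Lab.A →
      LPathOn T t lab' → 2 ≤ {w ∈ t | T.Adj v w}.ncard →
      (∀ x ∈ s, ∀ y ∈ t, (T.Adj x y ↔ x = u ∧ y = v)) →
      (∀ x ∈ s, lab' x = lab x) →
      InF T (s ∪ t) lab'
  | type3 (s : Set V) (lab : V → Option Lab) (t : Set V) (lab' : V → Option Lab)
      (u c : V) (k : ℕ) :
      InF T s lab → Disjoint s t → u ∈ s → c ∈ t → lab u = some (Lab.B k) →
      LGenStarOn T t c k lab' →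
      (∀ x ∈ s, ∀ y ∈ t, (T.Adj x y ↔ x = u ∧ y = c)) →
      (∀ x ∈ s, lab' x = lab x) →
      InF T (s ∪ t) lab'

/-- `G` is obtained from the tree `T` by expanding each edge of `T` into a complete
graph of arbitrary order: there is an embedding `ι` of the vertices of `T` and an
assignment `b` of a block of vertices of `G` to each edge of `T` such that an original
vertex lies in the block of an edge iff it is an endpoint of that edge, blocks of
distinct edges meet only in original vertices, every vertex of `G` lies in some block,
and two distinct vertices of `G` are adjacent iff they lie in a common block. -/
def IsBlockExpansion {U W : Type*} (T : SimpleGraph U) (G : SimpleGraph W) : Prop :=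
  ∃ (ι : U ↪ W) (b : Sym2 U → Set W),
    (∀ (u : U), ∀ e ∈ T.edgeSet, (ι u ∈ b e ↔ u ∈ e)) ∧
    (∀ e ∈ T.edgeSet, ∀ f ∈ T.edgeSet, e ≠ f → b e ∩ b f ⊆ Set.range ι) ∧
    (∀ w : W, ∃ e ∈ T.edgeSet, w ∈ b e) ∧
    (∀ x y : W, G.Adj x y ↔ x ≠ y ∧ ∃ e ∈ T.edgeSet, x ∈ b e ∧ y ∈ b e)

section AuxPC

variable {V : Type*}

private lemma reach_del_aux (H : SimpleGraph V) (u v : V) {x y : V} (w : H.Walk x y) :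
    (H.deleteEdges {s(u,v)}).Reachable x y ∨
      (((H.deleteEdges {s(u,v)}).Reachable x u ∨ (H.deleteEdges {s(u,v)}).Reachable x v) ∧
       ((H.deleteEdges {s(u,v)}).Reachable y u ∨ (H.deleteEdges {s(u,v)}).Reachable y v)) := by
  induction w with
  | nil => exact Or.inl (Reachable.refl _)
  | @cons a b c hab p ih =>
    by_cases he : s(a,b) = s(u,v)
    · have ha : (a = u ∧ b = v) ∨ (a = v ∧ b = u) := by rwa [Sym2.eq_iff] at he
      have hxa : (H.deleteEdges {s(u,v)}).Reachable a u ∨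
          (H.deleteEdges {s(u,v)}).Reachable a v := by
        rcases ha with ⟨rfl, _⟩ | ⟨rfl, _⟩
        exacts [Or.inl (Reachable.refl _), Or.inr (Reachable.refl _)]
      have hb : (H.deleteEdges {s(u,v)}).Reachable b u ∨
          (H.deleteEdges {s(u,v)}).Reachable b v := by
        rcases ha with ⟨_, rfl⟩ | ⟨_, rfl⟩
        exacts [Or.inr (Reachable.refl _), Or.inl (Reachable.refl _)]
      refine Or.inr ⟨hxa, ?_⟩
      rcases ih with h | ⟨_, hcpart⟩
      · rcases hb with h1 | h1
        exacts [Or.inl (h.symm.trans h1), Or.inr (h.symm.trans h1)]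
      · exact hcpart
    · have hab' : (H.deleteEdges {s(u,v)}).Adj a b := by
        rw [SimpleGraph.deleteEdges_adj]; exact ⟨hab, by simp [he]⟩
      rcases ih with h | ⟨hbp, hcp⟩
      · exact Or.inl (hab'.reachable.trans h)
      · refine Or.inr ⟨?_, hcp⟩
        rcases hbp with h1 | h1
        exacts [Or.inl (hab'.reachable.trans h1), Or.inr (hab'.reachable.trans h1)]

private lemma connected_deleteEdges (H : SimpleGraph V) (hc : H.Connected) {u v : V}
    (hr : (H.deleteEdges {s(u,v)}).Reachable u v) : (H.deleteEdges {s(u,v)}).Connected := by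
  have hpre : (H.deleteEdges {s(u,v)}).Preconnected := by
    intro x y
    obtain ⟨w⟩ := hc.preconnected x y
    rcases reach_del_aux H u v w with h | ⟨hx, hy⟩
    · exact h
    · have hx' : (H.deleteEdges {s(u,v)}).Reachable x u := by
        rcases hx with h | h
        · exact h
        · exact h.trans hr.symm
      have hy' : (H.deleteEdges {s(u,v)}).Reachable y u := by
        rcases hy with h | h
        · exact h
        · exact h.trans hr.symm
      exact hx'.trans hy'.symm
  have hne : Nonempty V := hc.nonempty
  exact Connected.mk hpre

private lemma card_cc_del_le [Finite V] (H : SimpleGraph V) (u v : V) :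
    Nat.card (H.deleteEdges {s(u,v)}).ConnectedComponent ≤ Nat.card H.ConnectedComponent + 1 := by
  classical
  set H' := H.deleteEdges {s(u,v)} with hH'
  have hle : H' ≤ H := SimpleGraph.deleteEdges_le _
  let φ : H'.ConnectedComponent → H.ConnectedComponent :=
    ConnectedComponent.map (Hom.ofLE hle)
  let F : H'.ConnectedComponent → H.ConnectedComponent ⊕ Unit := fun c =>
    if c = H'.connectedComponentMk v ∧ ¬ H'.Reachable u v then Sum.inr () else Sum.inl (φ c)
  have hinj : Function.Injective F := by
    intro c1 c2
    induction c1, c2 using ConnectedComponent.ind₂ with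
    | _ x y =>
      intro hF
      by_cases h1 : H'.connectedComponentMk x = H'.connectedComponentMk v ∧ ¬ H'.Reachable u v
      · by_cases h2 : H'.connectedComponentMk y = H'.connectedComponentMk v ∧ ¬ H'.Reachable u v
        · rw [h1.1, h2.1]
        · simp only [F, if_pos h1, if_neg h2] at hF
          exact absurd hF (by simp)
      · by_cases h2 : H'.connectedComponentMk y = H'.connectedComponentMk v ∧ ¬ H'.Reachable u v
        · simp only [F, if_pos h2, if_neg h1] at hF
          exact absurd hF (by simp)
        · simp only [F, if_neg h1, if_neg h2, Sum.inl.injEq] at hF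
          have hFm : H.connectedComponentMk x = H.connectedComponentMk y := hF
          have hxy : H.Reachable x y := ConnectedComponent.exact hFm
          obtain ⟨w⟩ := hxy
          rcases reach_del_aux H u v w with h | ⟨hx, hy⟩
          · exact ConnectedComponent.sound h
          · by_cases hruv : H'.Reachable u v
            · have hx' : H'.Reachable x u := by
                rcases hx with h | h
                · exact h
                · exact h.trans hruv.symm
              have hy' : H'.Reachable y u := by
                rcases hy with h | h
                · exact h
                · exact h.trans hruv.symm
              exact ConnectedComponent.sound (hx'.trans hy'.symm)
            · have hx' : H'.Reachable x u := by
                rcases hx with h | h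
                · exact h
                · exact absurd ⟨ConnectedComponent.sound h, hruv⟩ h1
              have hy' : H'.Reachable y u := by
                rcases hy with h | h
                · exact h
                · exact absurd ⟨ConnectedComponent.sound h, hruv⟩ h2
              exact ConnectedComponent.sound (hx'.trans hy'.symm)
  have hcard := Nat.card_le_card_of_injective F hinj
  simpa [Nat.card_sum] using hcard

private lemma card_cc_del_ge [Finite V] (H : SimpleGraph V) {u v : V} (hadj : H.Adj u v)
    (hnr : ¬ (H.deleteEdges {s(u,v)}).Reachable u v) :
    Nat.card H.ConnectedComponent + 1 ≤ Nat.card (H.deleteEdges {s(u,v)}).ConnectedComponent := by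
  classical
  set H' := H.deleteEdges {s(u,v)} with hH'
  have hle : H' ≤ H := SimpleGraph.deleteEdges_le _
  let φ : H'.ConnectedComponent → H.ConnectedComponent :=
    ConnectedComponent.map (Hom.ofLE hle)
  have hφmk : ∀ x : V, φ (H'.connectedComponentMk x) = H.connectedComponentMk x := fun _ => rfl
  let g : H.ConnectedComponent ⊕ Unit → H'.ConnectedComponent := fun z =>
    match z with
    | Sum.inl c => if c = H.connectedComponentMk u then H'.connectedComponentMk u
        else H'.connectedComponentMk (Quot.out c)
    | Sum.inr _ => H'.connectedComponentMk v
  have hφg : ∀ c, φ (g (Sum.inl c)) = c := by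
    intro c
    by_cases hcu : c = H.connectedComponentMk u
    · simp only [g, if_pos hcu]
      rw [hφmk, hcu]
    · simp only [g, if_neg hcu]
      rw [hφmk]
      exact Quot.out_eq c
  have hmkvu : H.connectedComponentMk v = H.connectedComponentMk u :=
    ConnectedComponent.sound hadj.symm.reachable
  have hinj : Function.Injective g := by
    rintro (c1 | ⟨⟩) (c2 | ⟨⟩) hg
    · have h := congrArg φ hg
      rw [hφg, hφg] at h
      rw [h]
    · exfalso
      have hc1 : c1 = H.connectedComponentMk v := by
        rw [← hφg c1, hg]
        exact hφmk v
      have hc1u : c1 = H.connectedComponentMk u := hc1.trans hmkvu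
      rw [hc1u] at hg
      simp only [g, if_pos rfl] at hg
      exact hnr (ConnectedComponent.exact hg)
    · exfalso
      have hc2 : c2 = H.connectedComponentMk v := by
        rw [← hφg c2, ← hg]
        exact hφmk v
      have hc2u : c2 = H.connectedComponentMk u := hc2.trans hmkvu
      rw [hc2u] at hg
      simp only [g, if_pos rfl] at hg
      exact hnr (ConnectedComponent.exact hg.symm)
    · rfl
  have hcard := Nat.card_le_card_of_injective g hinj
  simpa [Nat.card_sum] using hcard

private lemma acyclic_mono {G H : SimpleGraph V} (hle : H ≤ G) (hG : G.IsAcyclic) :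
    H.IsAcyclic := by
  intro v c hc
  exact hG (c.mapLe hle) (hc.mapLe _)

private lemma ndeg_eq_degree [Fintype V] (G : SimpleGraph V) [DecidableRel G.Adj] (v : V) :
    ndeg G v = G.degree v := by
  rw [ndeg, ← card_neighborFinset_eq_degree, neighborFinset_def, Set.ncard_eq_toFinset_card']

private lemma numEdges_eq_card [Fintype V] (G : SimpleGraph V) [DecidableRel G.Adj] :
    numEdges G = G.edgeFinset.card := by
  rw [numEdges, Set.ncard_eq_toFinset_card']
  congr 1

private lemma numLeaves_eq_card [Fintype V] (G : SimpleGraph V) [DecidableRel G.Adj] :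
    numLeaves G = (Finset.univ.filter fun v => G.degree v = 1).card := by
  rw [numLeaves]
  have h : {v | ndeg G v = 1} = {v | G.degree v = 1} := by
    ext v; simp [ndeg_eq_degree]
  rw [h, Set.ncard_eq_toFinset_card']
  congr 1
  ext v
  simp

private lemma one_le_degree [Fintype V] (G : SimpleGraph V) [DecidableRel G.Adj]
    (hc : G.Connected) (hn : 2 ≤ Fintype.card V) (v : V) : 1 ≤ G.degree v := by
  obtain ⟨w, hw⟩ := Fintype.exists_ne_of_one_lt_card (by omega) v
  obtain ⟨p⟩ := hc.preconnected v w
  cases p with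
  | nil => exact absurd rfl hw.symm
  | @cons _ b _ h q =>
    rw [← card_neighborFinset_eq_degree]
    have : b ∈ G.neighborFinset v := by simpa using h
    exact Finset.card_pos.mpr ⟨b, this⟩

private lemma heavy_sum_eq [Fintype V] (G : SimpleGraph V) [DecidableRel G.Adj]
    (hmin : ∀ v, 1 ≤ G.degree v) :
    ∑ v ∈ Finset.univ.filter (fun v => 2 < G.degree v), ((G.degree v : ℤ) - 2)
      = 2 * G.edgeFinset.card - 2 * Fintype.card V +
        (Finset.univ.filter fun v => G.degree v = 1).card := by
  classical
  have h1 : (∑ v : V, (G.degree v : ℤ)) = 2 * G.edgeFinset.card := by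
    exact_mod_cast congrArg (Nat.cast : ℕ → ℤ) G.sum_degrees_eq_twice_card_edges
  have hall : ∑ v : V, ((G.degree v : ℤ) - 2) = 2 * G.edgeFinset.card - 2 * Fintype.card V := by
    rw [Finset.sum_sub_distrib, h1, Finset.sum_const, Finset.card_univ]
    ring
  have hsplit := Finset.sum_filter_add_sum_filter_not Finset.univ (fun v => 2 < G.degree v)
      (fun v => (G.degree v : ℤ) - 2)
  have hlight : ∑ v ∈ Finset.univ.filter (fun v => ¬ 2 < G.degree v), ((G.degree v : ℤ) - 2)
      = -((Finset.univ.filter fun v => G.degree v = 1).card : ℤ) := by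
    rw [← Finset.sum_filter_add_sum_filter_not
        (Finset.univ.filter fun v => ¬ 2 < G.degree v) (fun v => G.degree v = 1)
        (fun v => (G.degree v : ℤ) - 2)]
    have hA : (Finset.univ.filter (fun v => ¬ 2 < G.degree v)).filter (fun v => G.degree v = 1)
        = Finset.univ.filter fun v => G.degree v = 1 := by
      rw [Finset.filter_filter]
      apply Finset.filter_congr
      intro v _
      constructor
      · intro h; exact h.2
      · intro h; exact ⟨by omega, h⟩
    have hB : ∑ v ∈ ((Finset.univ.filter (fun v => ¬ 2 < G.degree v)).filter
        (fun v => ¬ G.degree v = 1)), ((G.degree v : ℤ) - 2) = 0 := by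
      apply Finset.sum_eq_zero
      intro v hv
      simp only [Finset.mem_filter] at hv
      have h1' := hmin v
      have h2 : G.degree v = 2 := by omega
      rw [h2]
      ring
    rw [hA, hB, add_zero]
    have hC : ∀ v ∈ Finset.univ.filter (fun v => G.degree v = 1), ((G.degree v : ℤ) - 2)
        = -1 := by
      intro v hv
      simp only [Finset.mem_filter] at hv
      rw [hv.2]
      ring
    rw [Finset.sum_congr rfl hC, Finset.sum_const]
    simp
  rw [hlight] at hsplit
  rw [hall] at hsplit
  linarith

private lemma dropped_ge [Fintype V] (G H : SimpleGraph V) [DecidableRel G.Adj]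
    [DecidableRel H.Adj] (hle : H ≤ G) (hsp : TwoSparse G) (hdeg : ∀ v, H.degree v ≤ 2) :
    ∑ v ∈ Finset.univ.filter (fun v => 2 < G.degree v), ((G.degree v : ℤ) - 2)
      ≤ (G.edgeFinset.card : ℤ) - H.edgeFinset.card := by
  classical
  have hesub : H.edgeFinset ⊆ G.edgeFinset := by
    intro e he
    rw [mem_edgeFinset] at he ⊢
    exact edgeSet_mono hle he
  have hisub : ∀ v, H.incidenceFinset v ⊆ G.incidenceFinset v := by
    intro v e he
    rw [mem_incidenceFinset] at he ⊢
    exact ⟨edgeSet_mono hle he.1, he.2⟩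
  set hv : Finset V := Finset.univ.filter (fun v => 2 < G.degree v) with hhv
  set I : V → Finset (Sym2 V) := fun v => G.incidenceFinset v \ H.incidenceFinset v with hI
  have hmemI : ∀ v e, e ∈ I v → e ∈ G.edgeSet ∧ v ∈ e ∧ e ∉ H.edgeSet := by
    intro v e he
    rw [hI] at he
    simp only [Finset.mem_sdiff, mem_incidenceFinset] at he
    refine ⟨he.1.1, he.1.2, fun heH => he.2 ⟨heH, he.1.2⟩⟩
  have hdisj : ∀ x ∈ hv, ∀ y ∈ hv, x ≠ y → Disjoint (I x) (I y) := by
    intro x hx y hy hxy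
    rw [Finset.disjoint_left]
    intro e hex hey
    obtain ⟨he1, he2, -⟩ := hmemI x e hex
    obtain ⟨-, he3, -⟩ := hmemI y e hey
    have he : e = s(x, y) := (Sym2.mem_and_mem_iff hxy).mp ⟨he2, he3⟩
    rw [he, mem_edgeSet] at he1
    rcases hsp x y he1 with h | h <;> rw [ndeg_eq_degree] at h
    · rw [hhv, Finset.mem_filter] at hx; omega
    · rw [hhv, Finset.mem_filter] at hy; omega
  have hbiun : hv.biUnion I ⊆ G.edgeFinset \ H.edgeFinset := by
    intro e he
    rw [Finset.mem_biUnion] at he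
    obtain ⟨v, -, hev⟩ := he
    obtain ⟨h1, -, h3⟩ := hmemI v e hev
    rw [Finset.mem_sdiff, mem_edgeFinset, mem_edgeFinset]
    exact ⟨h1, h3⟩
  have hcard1 : ((G.edgeFinset \ H.edgeFinset).card : ℤ)
      = (G.edgeFinset.card : ℤ) - H.edgeFinset.card := by
    rw [Finset.card_sdiff_of_subset hesub]
    rw [Nat.cast_sub (Finset.card_le_card hesub)]
  have hcard2 : (hv.biUnion I).card = ∑ v ∈ hv, (I v).card := Finset.card_biUnion hdisj
  have hterm : ∀ v ∈ hv, ((G.degree v : ℤ) - 2) ≤ ((I v).card : ℤ) := by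
    intro v hvmem
    rw [hI]
    have : (G.incidenceFinset v \ H.incidenceFinset v).card
        = G.degree v - H.degree v := by
      rw [Finset.card_sdiff_of_subset (hisub v), card_incidenceFinset_eq_degree,
        card_incidenceFinset_eq_degree]
    rw [this]
    have hH2 := hdeg v
    have hHle : H.degree v ≤ G.degree v :=
      by have := Finset.card_le_card (hisub v); rwa [card_incidenceFinset_eq_degree, card_incidenceFinset_eq_degree] at this
    rw [Nat.cast_sub hHle]
    omega
  calc ∑ v ∈ hv, ((G.degree v : ℤ) - 2) ≤ ∑ v ∈ hv, ((I v).card : ℤ) :=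
        Finset.sum_le_sum hterm
    _ = ((hv.biUnion I).card : ℤ) := by rw [hcard2]; push_cast; rfl
    _ ≤ ((G.edgeFinset \ H.edgeFinset).card : ℤ) := by
        exact_mod_cast Finset.card_le_card hbiun
    _ = (G.edgeFinset.card : ℤ) - H.edgeFinset.card := hcard1

private lemma cc_add_edges [Fintype V] :
    ∀ (N : ℕ) (H : SimpleGraph V), H.edgeSet.ncard = N →
      (Fintype.card V ≤ Nat.card H.ConnectedComponent + N ∧
       (H.IsAcyclic → Nat.card H.ConnectedComponent + N ≤ Fintype.card V)) := by
  intro N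
  induction N using Nat.strong_induction_on with
  | _ N ih =>
    intro H hN
    cases N with
    | zero =>
      have hbot : H = ⊥ := by
        rw [← edgeSet_eq_empty]
        exact (Set.ncard_eq_zero (H.edgeSet.toFinite)).mp hN
      subst hbot
      have hbij : Function.Bijective
          ((⊥ : SimpleGraph V).connectedComponentMk) := by
        constructor
        · intro a b hab
          exact (SimpleGraph.reachable_bot).mp (ConnectedComponent.exact hab)
        · intro c
          obtain ⟨x, hx⟩ := c.exists_rep
          exact ⟨x, hx⟩
      have hcc : Nat.card (⊥ : SimpleGraph V).ConnectedComponent = Fintype.card V := by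
        rw [← Nat.card_eq_fintype_card]
        exact (Nat.card_eq_of_bijective _ hbij).symm
      omega
    | succ M =>
      have hne : H.edgeSet.Nonempty := by
        rw [← Set.ncard_pos (H.edgeSet.toFinite)]
        omega
      obtain ⟨e, he⟩ := hne
      induction e using Sym2.ind with
      | _ u v =>
        have hadj : H.Adj u v := (SimpleGraph.mem_edgeSet H).mp he
        have hE' : (H.deleteEdges {s(u,v)}).edgeSet.ncard = M := by
          rw [edgeSet_deleteEdges]
          have : (H.edgeSet \ {s(u,v)}).ncard = H.edgeSet.ncard - 1 :=
            Set.ncard_diff_singleton_of_mem he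
          omega
        have hIH := ih M (by omega) (H.deleteEdges {s(u,v)}) hE'
        constructor
        · have h1 := card_cc_del_le H u v
          omega
        · intro hac
          have hbr : H.IsBridge s(u,v) := isAcyclic_iff_forall_edge_isBridge.mp hac he
          have hnr : ¬ (H.deleteEdges {s(u,v)}).Reachable u v := isBridge_iff.mp hbr
          have h2 := card_cc_del_ge H hadj hnr
          have hac' : (H.deleteEdges {s(u,v)}).IsAcyclic :=
            acyclic_mono (deleteEdges_le _) hac
          have h3 := hIH.2 hac'
          omega

private lemma ndeg_mono [Fintype V] {G H : SimpleGraph V} (hle : H ≤ G) (v : V) :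
    ndeg H v ≤ ndeg G v := by
  apply Set.ncard_le_ncard _ (Set.toFinite _)
  intro x hx
  exact hle hx

private lemma twoSparse_mono [Fintype V] {G H : SimpleGraph V} (hle : H ≤ G)
    (hsp : TwoSparse G) : TwoSparse H := by
  intro x y hxy
  rcases hsp x y (hle hxy) with h | h
  · exact Or.inl ((ndeg_mono hle x).trans h)
  · exact Or.inr ((ndeg_mono hle y).trans h)

private lemma cycle_two_neighbors (G : SimpleGraph V) {v : V} (c : G.Walk v v)
    (hc : c.IsCycle) :
    ∃ x y, x ≠ y ∧ G.Adj v x ∧ G.Adj v y ∧ x ∈ c.support ∧ y ∈ c.support := by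
  have hnn : ¬ c.Nil := hc.not_nil
  rw [Walk.not_nil_iff] at hnn
  obtain ⟨x, hadj, q, rfl⟩ := hnn
  rw [Walk.cons_isCycle_iff] at hc
  obtain ⟨hq, hne⟩ := hc
  have hxv : x ≠ v := fun h => G.irrefl (h ▸ hadj)
  have hqr : ¬ q.reverse.Nil := Walk.not_nil_of_ne (fun h => hxv h.symm)
  rw [Walk.not_nil_iff] at hqr
  obtain ⟨y, hady, q', hq'⟩ := hqr
  have hyq : y ∈ q.support := by
    have : y ∈ q.reverse.support := by
      rw [hq']
      rw [Walk.support_cons]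
      exact List.mem_cons_of_mem _ q'.start_mem_support
    rwa [Walk.support_reverse, List.mem_reverse] at this
  have hvy : s(v, y) ∈ q.edges := by
    have : s(v, y) ∈ q.reverse.edges := by
      rw [hq', Walk.edges_cons]
      exact List.mem_cons_self
    rwa [Walk.edges_reverse, List.mem_reverse] at this
  have hxy : x ≠ y := by
    intro h
    subst h
    exact hne hvy
  refine ⟨x, y, hxy, hadj, hady, ?_, ?_⟩
  · rw [Walk.support_cons]
    exact List.mem_cons_of_mem _ q.start_mem_support
  · rw [Walk.support_cons]
    exact List.mem_cons_of_mem _ hyq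

private lemma rotate_support_mem [DecidableEq V] {G : SimpleGraph V} {a v x : V} (c : G.Walk a a)
    (hv : v ∈ c.support) (hx : x ∈ (c.rotate v hv).support) : x ∈ c.support := by
  rw [Walk.support_eq_cons] at hx
  rcases List.mem_cons.mp hx with rfl | hx
  · exact hv
  · have := (Walk.support_rotate c v hv).mem_iff.mp hx
    rw [Walk.support_eq_cons]
    exact List.mem_cons_of_mem _ this

private lemma cycle_light_closed [Fintype V] (G : SimpleGraph V) {a : V} (c : G.Walk a a)
    (hc : c.IsCycle) (hlight : ∀ w ∈ c.support, ndeg G w ≤ 2) :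
    ∀ v ∈ c.support, ndeg G v = 2 ∧ ∀ w, G.Adj v w → w ∈ c.support := by
  classical
  intro v hv
  obtain ⟨x, y, hxy, hax, hay, hxs, hys⟩ :=
    cycle_two_neighbors G (c.rotate v hv) (hc.rotate hv)
  have hxs' : x ∈ c.support := rotate_support_mem c hv hxs
  have hys' : y ∈ c.support := rotate_support_mem c hv hys
  have hsub : {x, y} ⊆ G.neighborSet v := by
    intro z hz
    rcases hz with rfl | hz
    · exact hax
    · rw [Set.mem_singleton_iff] at hz
      subst hz
      exact hay
  have hcard : ({x, y} : Set V).ncard = 2 := Set.ncard_pair hxy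
  have heq : ({x, y} : Set V) = G.neighborSet v := by
    apply Set.eq_of_subset_of_ncard_le hsub _ (Set.toFinite _)
    rw [hcard]
    exact hlight v hv
  constructor
  · rw [ndeg, ← heq, hcard]
  · intro w hw
    have : w ∈ ({x, y} : Set V) := by rw [heq]; exact hw
    rcases this with rfl | hz
    · exact hxs'
    · rw [Set.mem_singleton_iff] at hz
      subst hz
      exact hys'

private lemma all_ndeg_two [Fintype V] (G : SimpleGraph V) (hconn : G.Connected) {a : V}
    (c : G.Walk a a) (hc : c.IsCycle) (hlight : ∀ w ∈ c.support, ndeg G w ≤ 2) :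
    ∀ v, ndeg G v = 2 := by
  have hkey := cycle_light_closed G c hc hlight
  have hcl : ∀ (x y : V) (p : G.Walk x y), x ∈ c.support → y ∈ c.support := by
    intro x y p
    induction p with
    | nil => exact id
    | cons h q ih =>
      intro hx
      exact ih ((hkey _ hx).2 _ h)
  intro v
  obtain ⟨p⟩ := hconn.preconnected a v
  exact (hkey v (hcl a v p c.start_mem_support)).1

private lemma nbh_del_ne [Fintype V] (G : SimpleGraph V) {u v w : V} (hwu : w ≠ u)
    (hwv : w ≠ v) : (G.deleteEdges {s(u,v)}).neighborSet w = G.neighborSet w := by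
  ext x
  simp only [mem_neighborSet, deleteEdges_adj, Set.mem_singleton_iff]
  refine ⟨fun h => h.1, fun h => ⟨h, fun heq => ?_⟩⟩
  rcases Sym2.eq_iff.mp heq with ⟨h1, _⟩ | ⟨h1, _⟩
  · exact hwu h1
  · exact hwv h1

private lemma nbh_del_self [Fintype V] (G : SimpleGraph V) {u v : V} :
    (G.deleteEdges {s(u,v)}).neighborSet u = G.neighborSet u \ {v} := by
  ext x
  simp only [mem_neighborSet, deleteEdges_adj, Set.mem_singleton_iff, Set.mem_diff]
  constructor
  · rintro ⟨h1, h2⟩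
    exact ⟨h1, fun hx => h2 (by rw [hx])⟩
  · rintro ⟨h1, h2⟩
    exact ⟨h1, fun heq => h2 (Sym2.congr_right.mp heq)⟩

private lemma numLeaves_del_le [Fintype V] (G : SimpleGraph V) {u v : V} (hadj : G.Adj u v)
    (hdegu : 3 ≤ ndeg G u) :
    numLeaves (G.deleteEdges {s(u,v)}) ≤ numLeaves G + 1 := by
  have hsub : {w | ndeg (G.deleteEdges {s(u,v)}) w = 1} ⊆ {w | ndeg G w = 1} ∪ {v} := by
    intro w hw
    simp only [Set.mem_setOf_eq] at hw
    by_cases hwv : w = v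
    · exact Or.inr hwv
    by_cases hwu : w = u
    · exfalso
      subst hwu
      rw [ndeg, nbh_del_self] at hw
      have hd := Set.ncard_diff_singleton_of_mem (show v ∈ G.neighborSet w from hadj)
      rw [ndeg] at hdegu
      omega
    · left
      rw [Set.mem_setOf_eq, ndeg, ← nbh_del_ne G hwu hwv]
      exact hw
  calc numLeaves (G.deleteEdges {s(u,v)}) ≤ ({w | ndeg G w = 1} ∪ {v}).ncard :=
        Set.ncard_le_ncard hsub (Set.toFinite _)
    _ ≤ numLeaves G + 1 := by
        have h1 := Set.ncard_union_le {w | ndeg G w = 1} ({v} : Set V)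
        have h2 : ({v} : Set V).ncard = 1 := Set.ncard_singleton v
        rw [numLeaves]
        omega

private lemma tree_bound [Fintype V] (G : SimpleGraph V) (hconn : G.Connected)
    (hsp : TwoSparse G) (hac : G.IsAcyclic) (hn : 2 ≤ Fintype.card V) :
    ∃ H, H ≤ G ∧ IsLinearForest H ∧
      2 * (Fintype.card V : ℤ) - numEdges G - numLeaves G ≤ numEdges H := by
  classical
  have hex : ∀ v : V, ∃ t ⊆ G.neighborFinset v, t.card = G.degree v - 2 := by
    intro v
    exact Finset.exists_subset_card_eq (by rw [card_neighborFinset_eq_degree]; omega)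
  choose S hS1 hS2 using hex
  set hvset : Finset V := Finset.univ.filter (fun v => 2 < G.degree v) with hhv
  set Rf : Finset (Sym2 V) := hvset.biUnion (fun v => (S v).image (fun w => s(v, w))) with hRf
  set H : SimpleGraph V := G.deleteEdges ↑Rf with hH
  have hle : H ≤ G := deleteEdges_le _
  have hmemR : ∀ e, e ∈ Rf ↔ ∃ v, 2 < G.degree v ∧ ∃ w ∈ S v, s(v, w) = e := by
    intro e
    simp only [hRf, Finset.mem_biUnion, hhv, Finset.mem_filter, Finset.mem_univ, true_and,
      Finset.mem_image]
  have hSnb : ∀ v w, w ∈ S v → G.Adj v w := by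
    intro v w hw
    have := hS1 v hw
    rwa [mem_neighborFinset] at this
  have hnbH : ∀ v, 2 < G.degree v → H.neighborSet v = G.neighborSet v \ ↑(S v) := by
    intro v hv
    ext x
    simp only [hH, mem_neighborSet, deleteEdges_adj, Set.mem_diff, Finset.mem_coe]
    constructor
    · rintro ⟨h1, h2⟩
      refine ⟨h1, fun hx => h2 ?_⟩
      simp only [Finset.mem_coe, hmemR]
      exact ⟨v, hv, x, hx, rfl⟩
    · rintro ⟨h1, h2⟩
      refine ⟨h1, fun hR => ?_⟩
      simp only [Finset.mem_coe, hmemR] at hR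
      obtain ⟨v', hv', w', hw', he⟩ := hR
      rcases Sym2.eq_iff.mp he with ⟨hv'v, hw'x⟩ | ⟨hv'x, hw'v⟩
      · subst hv'v; subst hw'x
        exact h2 hw'
      · subst hv'x; subst hw'v
        rcases hsp _ _ h1 with h | h <;> rw [ndeg_eq_degree] at h <;> omega
  have hdegH : ∀ v, ndeg H v ≤ 2 := by
    intro v
    by_cases hv : 2 < G.degree v
    · rw [ndeg, hnbH v hv]
      have hsubS : ↑(S v) ⊆ G.neighborSet v := by
        intro x hx
        rw [Finset.mem_coe] at hx
        exact hSnb v x hx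
      rw [Set.ncard_diff hsubS (Set.toFinite _)]
      have h1 : (G.neighborSet v).ncard = G.degree v := ndeg_eq_degree G v
      have h2 : (↑(S v) : Set V).ncard = G.degree v - 2 := by
        rw [Set.ncard_coe_finset, hS2]
      omega
    · have h1 := ndeg_mono hle v
      have h2 : ndeg G v = G.degree v := ndeg_eq_degree G v
      omega
  have hRsub : ↑Rf ⊆ G.edgeSet := by
    intro e he
    simp only [Finset.mem_coe, hmemR] at he
    obtain ⟨v, hv, w, hw, heq⟩ := he
    rw [← heq, mem_edgeSet]
    exact hSnb v w hw
  have hRcard : Rf.card = ∑ v ∈ hvset, (G.degree v - 2) := by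
    rw [hRf]
    rw [Finset.card_biUnion ?disj]
    case disj =>
      intro x hx y hy hxy
      rw [Function.onFun, Finset.disjoint_left]
      intro e hex hey
      simp only [Finset.mem_image] at hex hey
      obtain ⟨wx, hwx, hex'⟩ := hex
      obtain ⟨wy, hwy, hey'⟩ := hey
      rw [← hey'] at hex'
      rcases Sym2.eq_iff.mp hex' with ⟨h1, -⟩ | ⟨h1, h2⟩
      · exact hxy h1
      · subst h1
        subst h2
        have hadj : G.Adj x wx := hSnb x wx hwx
        rw [Finset.mem_coe, hhv, Finset.mem_filter] at hx hy
        rcases hsp x wx hadj with h | h <;> rw [ndeg_eq_degree] at h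
        · omega
        · have := hy.2
          omega
    apply Finset.sum_congr rfl
    intro v _
    rw [Finset.card_image_of_injective _ (fun a b hab => Sym2.congr_right.mp hab)]
    exact hS2 v
  have hmindeg : ∀ v, 1 ≤ G.degree v := one_le_degree G hconn hn
  have hsum := heavy_sum_eq G hmindeg
  have hEH : (numEdges H : ℤ) = (numEdges G : ℤ) - Rf.card := by
    have h1 : H.edgeSet = G.edgeSet \ ↑Rf := edgeSet_deleteEdges _
    have h2 : numEdges H = numEdges G - Rf.card := by
      rw [numEdges, numEdges, h1, Set.ncard_diff hRsub (Set.toFinite _), Set.ncard_coe_finset]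
    have h3 : Rf.card ≤ numEdges G := by
      rw [numEdges, ← Set.ncard_coe_finset]
      exact Set.ncard_le_ncard hRsub (Set.toFinite _)
    rw [h2, Nat.cast_sub h3]
  have hRZ : (Rf.card : ℤ) = ∑ v ∈ hvset, ((G.degree v : ℤ) - 2) := by
    rw [hRcard, Nat.cast_sum]
    apply Finset.sum_congr rfl
    intro v hv
    rw [hhv, Finset.mem_filter] at hv
    have : 2 ≤ G.degree v := by omega
    push_cast [Nat.cast_sub this]
    rfl
  refine ⟨H, hle, ⟨acyclic_mono hle hac, hdegH⟩, ?_⟩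
  rw [hEH, hRZ, hhv]
  rw [numEdges_eq_card G, numLeaves_eq_card G]
  linarith [hsum]

private lemma partB [Fintype V] :
    ∀ (N : ℕ) (G : SimpleGraph V), numEdges G = N → G.Connected → TwoSparse G →
      ¬ IsCycleGraph G → 1 ≤ numEdges G →
      ∃ H, H ≤ G ∧ IsLinearForest H ∧
        2 * (Fintype.card V : ℤ) - numEdges G - numLeaves G ≤ numEdges H := by
  intro N
  induction N using Nat.strong_induction_on with
  | _ N ih =>
    intro G hN hconn hsp hnc hm
    classical
    have hn2 : 2 ≤ Fintype.card V := by
      have hne : G.edgeSet.Nonempty := by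
        rw [← Set.ncard_pos (Set.toFinite _)]
        have : numEdges G = G.edgeSet.ncard := rfl
        omega
      obtain ⟨e, he⟩ := hne
      induction e using Sym2.ind with
      | _ u v =>
        have huv : u ≠ v := G.ne_of_adj ((SimpleGraph.mem_edgeSet G).mp he)
        have : 1 < Fintype.card V := Fintype.one_lt_card_iff_nontrivial.mpr ⟨⟨u, v, huv⟩⟩
        omega
    by_cases hac : G.IsAcyclic
    · exact tree_bound G hconn hsp hac hn2
    · rw [IsAcyclic] at hac
      push_neg at hac
      obtain ⟨a, c, hc⟩ := hac
      by_cases hheavy : ∃ w ∈ c.support, 2 < ndeg G w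
      · obtain ⟨w, hws, hw⟩ := hheavy
        have hc' : (c.rotate w hws).IsCycle := hc.rotate hws
        have hnn : ¬ (c.rotate w hws).Nil := hc'.not_nil
        rw [Walk.not_nil_iff] at hnn
        obtain ⟨x, hadj, q, hq⟩ := hnn
        have hedge : s(w, x) ∈ (c.rotate w hws).edges := by
          rw [hq, Walk.edges_cons]
          exact List.mem_cons_self
        have hreach : (G \ fromEdgeSet {s(w,x)}).Reachable w x :=
          (adj_and_reachable_delete_edges_iff_exists_cycle.mpr ⟨w, c.rotate w hws, hc', hedge⟩).2
        have hreach' : (G.deleteEdges {s(w,x)}).Reachable w x := hreach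
        have hconn' : (G.deleteEdges {s(w,x)}).Connected :=
          connected_deleteEdges G hconn hreach'
        have hle' : G.deleteEdges {s(w,x)} ≤ G := deleteEdges_le _
        have hsp' : TwoSparse (G.deleteEdges {s(w,x)}) := twoSparse_mono hle' hsp
        have hsxw : s(w,x) ∈ G.edgeSet := (SimpleGraph.mem_edgeSet G).mpr hadj
        have hNdef : G.edgeSet.ncard = N := hN
        have hE' : numEdges (G.deleteEdges {s(w,x)}) = N - 1 := by
          have h1 : (G.deleteEdges {s(w,x)}).edgeSet = G.edgeSet \ {s(w,x)} :=
            edgeSet_deleteEdges _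
          have h2 : (G.edgeSet \ {s(w,x)}).ncard = G.edgeSet.ncard - 1 :=
            Set.ncard_diff_singleton_of_mem hsxw
          show (G.deleteEdges {s(w,x)}).edgeSet.ncard = N - 1
          rw [h1, h2, hNdef]
        have hwdeg : ndeg G w ≤ numEdges G := by
          rw [ndeg_eq_degree, numEdges_eq_card, ← card_incidenceFinset_eq_degree]
          apply Finset.card_le_card
          intro e he
          rw [mem_incidenceFinset] at he
          rw [mem_edgeFinset]
          exact he.1
        have hN3 : 3 ≤ N := by
          rw [hN] at hwdeg
          omega
        have hm' : 1 ≤ numEdges (G.deleteEdges {s(w,x)}) := by omega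
        have hndegw : ndeg (G.deleteEdges {s(w,x)}) w = ndeg G w - 1 := by
          rw [ndeg, nbh_del_self, ndeg]
          exact Set.ncard_diff_singleton_of_mem hadj
        have hndegx : ndeg (G.deleteEdges {s(w,x)}) x = ndeg G x - 1 := by
          have hswap : ({s(w,x)} : Set (Sym2 V)) = {s(x,w)} := by rw [Sym2.eq_swap]
          rw [ndeg, hswap, nbh_del_self, ndeg]
          exact Set.ncard_diff_singleton_of_mem hadj.symm
        have hnc' : ¬ IsCycleGraph (G.deleteEdges {s(w,x)}) := by
          rintro ⟨-, hdeg2⟩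
          have h1 := hdeg2 w
          have h2 := hdeg2 x
          have hx1 : 1 ≤ ndeg G x := by
            rw [ndeg_eq_degree]
            exact one_le_degree G hconn hn2 x
          rcases hsp w x hadj with h | h <;> omega
        have hlv : numLeaves (G.deleteEdges {s(w,x)}) ≤ numLeaves G + 1 :=
          numLeaves_del_le G hadj (by omega)
        obtain ⟨H, hH1, hH2, hH3⟩ := ih (N-1) (by omega) (G.deleteEdges {s(w,x)})
          hE' hconn' hsp' hnc' hm'
        refine ⟨H, hH1.trans hle', hH2, ?_⟩
        rw [hE'] at hH3
        rw [hN]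
        have hc1 : ((N - 1 : ℕ) : ℤ) = (N : ℤ) - 1 := by
          rw [Nat.cast_sub (by omega)]
          norm_num
        rw [hc1] at hH3
        have hc2 : (numLeaves (G.deleteEdges {s(w,x)}) : ℤ) ≤ (numLeaves G : ℤ) + 1 := by
          exact_mod_cast hlv
        linarith
      · push_neg at hheavy
        exact absurd ⟨hconn, all_ndeg_two G hconn c hc hheavy⟩ hnc

end AuxPC

/-- **Theorem (Statement 19).** Let `G` be a connected 2-sparse graph with `m ≥ 1`
edges, `n` vertices, and `ℓ` leaves.  If `G` is not a cycle, then `P(G) = ℓ + m − n`. -/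
theorem twoSparse_pathCoverNumber {V : Type*} [Fintype V] (G : SimpleGraph V)
    (hc : G.Connected) (hsp : TwoSparse G) (hm : 1 ≤ numEdges G)
    (hnc : ¬ IsCycleGraph G) :
    (pathCoverNumber G : ℤ) = numLeaves G + numEdges G - Fintype.card V := by
  classical
  have hn2 : 2 ≤ Fintype.card V := by
    have hne : G.edgeSet.Nonempty := by
      rw [← Set.ncard_pos (Set.toFinite _)]
      have : numEdges G = G.edgeSet.ncard := rfl
      omega
    obtain ⟨e, he⟩ := hne
    induction e using Sym2.ind with
    | _ u v =>
      have huv : u ≠ v := G.ne_of_adj ((SimpleGraph.mem_edgeSet G).mp he)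
      have : 1 < Fintype.card V := Fintype.one_lt_card_iff_nontrivial.mpr ⟨⟨u, v, huv⟩⟩
      omega
  have hsum := heavy_sum_eq G (one_le_degree G hc hn2)
  have hmE : (numEdges G : ℤ) = (G.edgeFinset.card : ℤ) := by
    exact_mod_cast congrArg (Nat.cast : ℕ → ℤ) (numEdges_eq_card G)
  have hmL : (numLeaves G : ℤ)
      = ((Finset.univ.filter fun v => G.degree v = 1).card : ℤ) := by
    exact_mod_cast congrArg (Nat.cast : ℕ → ℤ) (numLeaves_eq_card G)
  have hlow : ∀ H, H ≤ G → IsLinearForest H →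
      (numLeaves G : ℤ) + numEdges G - Fintype.card V ≤ numPaths H := by
    intro H hle hlf
    have hcc := (cc_add_edges (numEdges H) H rfl).1
    have hdeg' : ∀ v, H.degree v ≤ 2 := by
      intro v
      have := hlf.2 v
      rwa [ndeg_eq_degree] at this
    have hA2 := dropped_ge G H hle hsp hdeg'
    have hHE : (numEdges H : ℤ) = (H.edgeFinset.card : ℤ) := by
      exact_mod_cast congrArg (Nat.cast : ℕ → ℤ) (numEdges_eq_card H)
    have hccZ : (Fintype.card V : ℤ) ≤ (Nat.card H.ConnectedComponent : ℤ) + numEdges H := by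
      exact_mod_cast hcc
    have hnp : (numPaths H : ℤ) = (Nat.card H.ConnectedComponent : ℤ) := rfl
    rw [hnp]
    linarith
  obtain ⟨H₀, h01, h02, h03⟩ := partB (numEdges G) G rfl hc hsp hnc hm
  have hup : (numPaths H₀ : ℤ) ≤ (numLeaves G : ℤ) + numEdges G - Fintype.card V := by
    have hcc := (cc_add_edges (numEdges H₀) H₀ rfl).2 h02.1
    have hccZ : (Nat.card H₀.ConnectedComponent : ℤ) + numEdges H₀ ≤ Fintype.card V := by
      exact_mod_cast hcc
    have hnp : (numPaths H₀ : ℤ) = (Nat.card H₀.ConnectedComponent : ℤ) := rfl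
    rw [hnp]
    linarith
  have hval : (numPaths H₀ : ℤ) = (numLeaves G : ℤ) + numEdges G - Fintype.card V :=
    le_antisymm hup (hlow H₀ h01 h02)
  have hmem : numPaths H₀ ∈ {k | ∃ H ≤ G, IsLinearForest H ∧ numPaths H = k} :=
    ⟨H₀, h01, h02, rfl⟩
  have hpc : pathCoverNumber G = numPaths H₀ := by
    apply le_antisymm
    · exact Nat.sInf_le hmem
    · apply le_csInf ⟨numPaths H₀, hmem⟩
      rintro k ⟨H, hH1, hH2, rfl⟩
      have h1 := hlow H hH1 hH2
      have h2 : (numPaths H₀ : ℤ) ≤ (numPaths H : ℤ) := by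
        rw [hval]
        exact h1
      exact_mod_cast h2
  rw [hpc, hval]

end PaperPC
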